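/- Let V₂ be the subspace of ℝ^5 spanned by v₁ = (1,0,−1,0,0) and v₂ = (0,1,0,0,0). Identify a vector (α₀,α₁,α₂,β₁,β₂) ∈ ℝ^5 with the trigonometric polynomial t ↦ α₀ + Σ_{k=1}^{2} (α_k cos kt − β_k sin kt), and call the vector a plus-vector if this trigonometric polynomial is ≥ 0 for all t. Then a linear combination c₁v₁ + c₂v₂ is a plus-vector if and only if c₁ ≥ 0 and c₂ = 0; consequently the maximum number of linearly independent plus-vectors in V₂ equals 1. -/
import Mathlib


open Real
open scoped Real BigOperators Matrix

noncomputable section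

/-- A vector `(α₀, α₁, α₂, β₁, β₂) ∈ ℝ⁵` (with `d = 2`) is a *plus-vector* if the associated
trigonometric polynomial `t ↦ α₀ + Σ_{k=1}^2 (α_k cos kt − β_k sin kt)` is nonnegative on
`(-π, π]`. Coordinates: `v 0 = α₀`, `v 1 = α₁`, `v 2 = α₂`, `v 3 = β₁`, `v 4 = β₂`. -/
def IsPlusVec5 (v : Fin 5 → ℝ) : Prop :=
  ∀ t ∈ Set.Ioc (-π) π,
    0 ≤ v 0 + (v 1 * Real.cos t - v 3 * Real.sin t)
      + (v 2 * Real.cos (2 * t) - v 4 * Real.sin (2 * t))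

lemma key13 : ∀ c₁ c₂ : ℝ,
    IsPlusVec5 (c₁ • (![1, 0, -1, 0, 0] : Fin 5 → ℝ) + c₂ • ![0, 1, 0, 0, 0]) ↔
      (0 ≤ c₁ ∧ c₂ = 0) := by
  intro c₁ c₂
  have hπ := Real.pi_pos
  constructor
  · intro h
    have h0 := h 0 ⟨by linarith, le_of_lt hπ⟩
    have h1 := h π ⟨by linarith, le_refl _⟩
    have h2 := h (π / 2) ⟨by linarith, by linarith⟩
    simp only [Pi.add_apply, Pi.smul_apply, Matrix.cons_val_zero, Matrix.cons_val_one,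
      Matrix.head_cons, smul_eq_mul, Matrix.cons_val_fin_one] at h0 h1 h2
    rw [show (2 : ℝ) * 0 = 0 by ring] at h0
    rw [show (2 : ℝ) * π = 2 * π by ring] at h1
    rw [show (2 : ℝ) * (π / 2) = π by ring] at h2
    simp [Real.cos_pi, Real.sin_pi, Real.cos_two_pi, Real.sin_two_pi,
      Real.cos_pi_div_two, Real.sin_pi_div_two, Matrix.cons_val_two, Matrix.cons_val_three,
      Matrix.cons_val_four, Matrix.tail_cons] at h0 h1 h2
    constructor
    · -- h2 gives c₁ stuff
      nlinarith [h2]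
    · nlinarith [h0, h1]
  · rintro ⟨hc, rfl⟩
    intro t _
    have hcos : Real.cos (2 * t) ≤ 1 := Real.cos_le_one _
    simp only [Pi.add_apply, Pi.smul_apply, Matrix.cons_val_zero, Matrix.cons_val_one,
      Matrix.head_cons, smul_eq_mul, Matrix.cons_val_fin_one, Matrix.cons_val_two,
      Matrix.cons_val_three, Matrix.cons_val_four, Matrix.tail_cons]
    nlinarith

/-- With `v₁ = (1,0,−1,0,0)` and `v₂ = (0,1,0,0,0)` spanning `V₂ ⊆ ℝ⁵`:
`c₁ v₁ + c₂ v₂` is a plus-vector iff `c₁ ≥ 0` and `c₂ = 0`; consequently `V₂` contains a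
nonzero plus-vector, but no two linearly independent plus-vectors, i.e. `dim₊ V₂ = 1`. -/
theorem stmt13 :
    (∀ c₁ c₂ : ℝ,
        IsPlusVec5 (c₁ • (![1, 0, -1, 0, 0] : Fin 5 → ℝ) + c₂ • ![0, 1, 0, 0, 0]) ↔
          (0 ≤ c₁ ∧ c₂ = 0))
      ∧ (∃ u ∈ Submodule.span ℝ ({![1, 0, -1, 0, 0], ![0, 1, 0, 0, 0]} : Set (Fin 5 → ℝ)),
          IsPlusVec5 u ∧ u ≠ 0)
      ∧ (∀ u w : Fin 5 → ℝ,
          u ∈ Submodule.span ℝ ({![1, 0, -1, 0, 0], ![0, 1, 0, 0, 0]} : Set (Fin 5 → ℝ)) →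
          w ∈ Submodule.span ℝ ({![1, 0, -1, 0, 0], ![0, 1, 0, 0, 0]} : Set (Fin 5 → ℝ)) →
          IsPlusVec5 u → IsPlusVec5 w → ¬ LinearIndependent ℝ ![u, w]) := by
  refine ⟨key13, ?_, ?_⟩
  · refine ⟨![1, 0, -1, 0, 0], Submodule.subset_span (by simp), ?_, ?_⟩
    · have := (key13 1 0).mpr ⟨zero_le_one, rfl⟩
      simpa using this
    · intro h
      have := congrFun h 0
      simp at this
  · intro u w hu hw hpu hpw
    rw [Submodule.mem_span_pair] at hu hw
    obtain ⟨a, b, rfl⟩ := hu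
    obtain ⟨a', b', rfl⟩ := hw
    obtain ⟨-, rfl⟩ := (key13 a b).mp hpu
    obtain ⟨-, rfl⟩ := (key13 a' b').mp hpw
    intro hli
    rcases eq_or_ne a' 0 with h' | h'
    · exact hli.ne_zero 1 (by simp [h'])
    · have hc : a' • (a • (![1, 0, -1, 0, 0] : Fin 5 → ℝ) + (0:ℝ) • ![0, 1, 0, 0, 0])
          + (-a) • (a' • (![1, 0, -1, 0, 0] : Fin 5 → ℝ) + (0:ℝ) • ![0, 1, 0, 0, 0]) = 0 := by
        module
      exact h' ((LinearIndependent.pair_iff.mp hli a' (-a) hc).1)
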